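/- arXiv:1511.00792 — 3 statements merged into one kernel-verified Lean document; each statement's English description precedes it below -/
import Mathlib

section
/- If M₂ = Σ_{k=1}^K π_k μ̄_k μ̄_kᵀ is a D×D positive semidefinite matrix of rank K with π_k > 0, and W is a D×K matrix satisfying Wᵀ M₂ W = I_K, then the vectors μ̃_k := √π_k · Wᵀ μ̄_k, for k = 1,…,K, form an orthonormal family in ℝ^K. -/
open Matrix Finset

/-- If `M₂ = ∑ k, π k • μ̄ k μ̄ kᵀ` is PSD of rank `K` with `π k > 0` and
`Wᵀ M₂ W = I`, then the vectors `μ̃ k = √(π k) • Wᵀ μ̄ k` are orthonormal. -/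
theorem stmt0 (D K : ℕ) (π : Fin K → ℝ) (hπ : ∀ k, 0 < π k)
    (μbar : Fin K → (Fin D → ℝ))
    (M₂ : Matrix (Fin D) (Fin D) ℝ)
    (hM₂ : M₂ = ∑ k, π k • Matrix.vecMulVec (μbar k) (μbar k))
    (hPSD : M₂.PosSemidef) (hrank : M₂.rank = K)
    (W : Matrix (Fin D) (Fin K) ℝ)
    (hW : Wᵀ * M₂ * W = 1) :
    ∀ j k : Fin K,
      (Real.sqrt (π j) • (Wᵀ).mulVec (μbar j)) ⬝ᵥ (Real.sqrt (π k) • (Wᵀ).mulVec (μbar k))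
        = if j = k then 1 else 0 := by
  intro j k
  -- C has columns √(π l) • μbar l
  set C : Matrix (Fin D) (Fin K) ℝ := fun d l => Real.sqrt (π l) * μbar l d with hC
  have hCCt : C * Cᵀ = M₂ := by
    rw [hM₂]
    ext d d'
    simp only [Matrix.mul_apply, Matrix.transpose_apply, Matrix.sum_apply,
      Matrix.smul_apply, Matrix.vecMulVec_apply, smul_eq_mul]
    simp only [hC]
    refine Finset.sum_congr rfl fun l _ => ?_
    have : Real.sqrt (π l) * Real.sqrt (π l) = π l :=
      Real.mul_self_sqrt (hπ l).le
    linear_combination (μbar l d * μbar l d') * this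
  set B : Matrix (Fin K) (Fin K) ℝ := Wᵀ * C with hB
  have hBBt : B * Bᵀ = 1 := by
    rw [hB, Matrix.transpose_mul, Matrix.transpose_transpose,
      Matrix.mul_assoc, ← Matrix.mul_assoc C, hCCt, ← Matrix.mul_assoc, hW]
  have hBtB : Bᵀ * B = 1 := mul_eq_one_comm.mp hBBt
  have h := congrFun (congrFun hBtB j) k
  have hBcol : ∀ (l : Fin K) (i : Fin K),
      B i l = Real.sqrt (π l) * (Wᵀ).mulVec (μbar l) i := by
    intro l i
    simp only [hB, Matrix.mul_apply, Matrix.mulVec, dotProduct, Finset.mul_sum]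
    simp only [hC]
    refine Finset.sum_congr rfl fun d _ => ?_
    ring
  simp only [Matrix.mul_apply, Matrix.transpose_apply, Matrix.one_apply] at h
  rw [← h]
  simp only [dotProduct, Pi.smul_apply, smul_eq_mul, hBcol]
end

section
/- Let M₂ and M̂₂ be symmetric PSD matrices with ‖M₂ − M̂₂‖₂ ≤ σ_K(M₂)/2, where σ_K denotes the K-th largest eigenvalue. If Ŵ whitens M̂₂ (i.e., Ŵᵀ M̂₂ Ŵ = I_K via its top-K eigendecomposition), then ‖Ŵ‖₂² ≤ 2/σ_K(M₂). -/
open Matrix Finset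

noncomputable def opNorm {m n : Type*} [Fintype m] [Fintype n] [DecidableEq n]
    (A : Matrix m n ℝ) : ℝ :=
  ‖(Matrix.toEuclideanLin A).toContinuousLinearMap‖

lemma euc_norm_sq {n : Type*} [Fintype n] (x : EuclideanSpace ℝ n) :
    ‖x‖ ^ 2 = (WithLp.equiv 2 (n → ℝ) x) ⬝ᵥ (WithLp.equiv 2 (n → ℝ) x) := by
  rw [← real_inner_self_eq_norm_sq]
  rw [EuclideanSpace.inner_eq_star_dotProduct]
  simp [dotProduct]

lemma opNorm_le_of_sq {m n : Type*} [Fintype m] [Fintype n] [DecidableEq n]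
    (A : Matrix m n ℝ) (C : ℝ) (hC : 0 ≤ C)
    (h : ∀ x : n → ℝ, (A *ᵥ x) ⬝ᵥ (A *ᵥ x) ≤ C * (x ⬝ᵥ x)) :
    opNorm A ≤ Real.sqrt C := by
  apply ContinuousLinearMap.opNorm_le_bound _ (Real.sqrt_nonneg C)
  intro x
  have h1 : ‖(Matrix.toEuclideanLin A).toContinuousLinearMap x‖ ^ 2 ≤ (Real.sqrt C * ‖x‖) ^ 2 := by
    rw [euc_norm_sq]
    have := h (WithLp.equiv 2 (n → ℝ) x)
    simp only [LinearMap.coe_toContinuousLinearMap', WithLp.equiv_apply, Matrix.ofLp_toEuclideanLin_apply]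
    rw [mul_pow, Real.sq_sqrt hC, euc_norm_sq]
    exact this
  have h2 := Real.sqrt_le_sqrt h1
  rwa [Real.sqrt_sq (norm_nonneg _),
    Real.sqrt_sq (mul_nonneg (Real.sqrt_nonneg C) (norm_nonneg x))] at h2

lemma dot_le_opNorm {n : Type*} [Fintype n] [DecidableEq n]
    (A : Matrix n n ℝ) (x : n → ℝ) :
    x ⬝ᵥ (A *ᵥ x) ≤ opNorm A * (x ⬝ᵥ x) := by
  set y : EuclideanSpace ℝ n := (WithLp.equiv 2 (n → ℝ)).symm x with hy
  have h1 : x ⬝ᵥ (A *ᵥ x) = inner ℝ y ((Matrix.toEuclideanLin A).toContinuousLinearMap y) := by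
    rw [EuclideanSpace.inner_eq_star_dotProduct]
    simp [y, dotProduct, Matrix.mulVec, mul_comm]
  have h2 : (inner ℝ y ((Matrix.toEuclideanLin A).toContinuousLinearMap y) : ℝ)
      ≤ ‖y‖ * ‖(Matrix.toEuclideanLin A).toContinuousLinearMap y‖ := real_inner_le_norm _ _
  have h3 : ‖(Matrix.toEuclideanLin A).toContinuousLinearMap y‖ ≤ opNorm A * ‖y‖ :=
    (Matrix.toEuclideanLin A).toContinuousLinearMap.le_opNorm y
  have h4 : x ⬝ᵥ x = ‖y‖ ^ 2 := by rw [euc_norm_sq]; simp [y]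
  calc x ⬝ᵥ (A *ᵥ x) ≤ ‖y‖ * (opNorm A * ‖y‖) := by
        rw [h1]; exact h2.trans (by nlinarith [norm_nonneg y, norm_nonneg ((Matrix.toEuclideanLin A).toContinuousLinearMap y)])
    _ = opNorm A * (x ⬝ᵥ x) := by rw [h4]; ring

lemma orth_dot {m n : Type*} [Fintype m] [Fintype n] [DecidableEq n]
    (Q : Matrix m n ℝ) (hQ : Qᵀ * Q = 1) (a b : n → ℝ) :
    (Q *ᵥ a) ⬝ᵥ (Q *ᵥ b) = a ⬝ᵥ b := by
  rw [Matrix.dotProduct_mulVec, ← Matrix.mulVec_transpose, Matrix.mulVec_mulVec, hQ,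
    Matrix.one_mulVec]

lemma orth_quad {n : Type*} [Fintype n] [DecidableEq n]
    (Q : Matrix n n ℝ) (hQ : Qᵀ * Q = 1) (σ : n → ℝ) (c : n → ℝ) :
    (Q *ᵥ c) ⬝ᵥ ((Q * Matrix.diagonal σ * Qᵀ) *ᵥ (Q *ᵥ c)) = ∑ i, σ i * c i ^ 2 := by
  have h1 : (Q * Matrix.diagonal σ * Qᵀ) *ᵥ (Q *ᵥ c) = Q *ᵥ (Matrix.diagonal σ *ᵥ c) := by
    rw [Matrix.mulVec_mulVec, Matrix.mul_assoc, Matrix.mul_assoc, hQ, Matrix.mul_one,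
      ← Matrix.mulVec_mulVec]
  rw [h1, orth_dot Q hQ]
  simp [dotProduct, Matrix.mulVec_diagonal]
  exact Finset.sum_congr rfl fun i _ => by ring
/-- extension by zero of a vector supported on an index set -/
noncomputable def extMap (D : ℕ) (s : Set (Fin D)) [DecidablePred (· ∈ s)] :
    (s → ℝ) →ₗ[ℝ] (Fin D → ℝ) where
  toFun c i := if h : i ∈ s then c ⟨i, h⟩ else 0
  map_add' a b := by funext i; by_cases h : i ∈ s <;> simp [h]
  map_smul' r a := by funext i; by_cases h : i ∈ s <;> simp [h]

lemma extMap_inj (D : ℕ) (s : Set (Fin D)) [DecidablePred (· ∈ s)] :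
    Function.Injective (extMap D s) := by
  intro a b hab
  funext ⟨i, hi⟩
  have := congrFun hab i
  simpa [extMap, hi] using this

lemma extMap_mem (D : ℕ) (s : Set (Fin D)) [DecidablePred (· ∈ s)] (c : s → ℝ) (i : Fin D)
    (hi : extMap D s c i ≠ 0) : i ∈ s := by
  by_contra h; simp [extMap, h] at hi

lemma weyl_step (D K : ℕ) (hK : 0 < K) (hKD : K ≤ D)
    (M N : Matrix (Fin D) (Fin D) ℝ)
    (σ : Fin D → ℝ) (Q : Matrix (Fin D) (Fin D) ℝ)
    (hQ : Qᵀ * Q = 1) (hsort : Antitone σ)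
    (hdec : M = Q * Matrix.diagonal σ * Qᵀ)
    (σ' : Fin D → ℝ) (Q' : Matrix (Fin D) (Fin D) ℝ)
    (hQ' : Q'ᵀ * Q' = 1) (hsort' : Antitone σ')
    (hdec' : N = Q' * Matrix.diagonal σ' * Q'ᵀ) :
    σ ⟨K - 1, Nat.lt_of_lt_of_le (Nat.sub_lt hK Nat.one_pos) hKD⟩ ≤
      σ' ⟨K - 1, Nat.lt_of_lt_of_le (Nat.sub_lt hK Nat.one_pos) hKD⟩ + opNorm (M - N) := by
  classical
  set kk : Fin D := ⟨K - 1, by omega⟩ with hkk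
  have hQinj : Function.Injective (Matrix.mulVecLin Q) := by
    intro a b hab
    have : Qᵀ *ᵥ (Q *ᵥ a) = Qᵀ *ᵥ (Q *ᵥ b) := by
      simpa [Matrix.mulVecLin_apply] using congrArg (Qᵀ *ᵥ ·) hab
    simpa [Matrix.mulVec_mulVec, hQ, Matrix.one_mulVec] using this
  have hQ'inj : Function.Injective (Matrix.mulVecLin Q') := by
    intro a b hab
    have : Q'ᵀ *ᵥ (Q' *ᵥ a) = Q'ᵀ *ᵥ (Q' *ᵥ b) := by
      simpa [Matrix.mulVecLin_apply] using congrArg (Q'ᵀ *ᵥ ·) hab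
    simpa [Matrix.mulVec_mulVec, hQ', Matrix.one_mulVec] using this
  set s₁ : Set (Fin D) := {i | (i : ℕ) < K} with hs₁
  set s₂ : Set (Fin D) := {i | K - 1 ≤ (i : ℕ)} with hs₂
  set f₁ := (Matrix.mulVecLin Q) ∘ₗ extMap D s₁ with hf₁
  set f₂ := (Matrix.mulVecLin Q') ∘ₗ extMap D s₂ with hf₂
  have hinj1 : Function.Injective f₁ := by
    rw [hf₁, LinearMap.coe_comp]
    exact Function.Injective.comp hQinj (extMap_inj D s₁)
  have hinj2 : Function.Injective f₂ := by
    rw [hf₂, LinearMap.coe_comp]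
    exact Function.Injective.comp hQ'inj (extMap_inj D s₂)
  have e1 : s₁ ≃ Fin K :=
    { toFun := fun i => ⟨i.1.1, i.2⟩
      invFun := fun k => ⟨⟨k.1, by omega⟩, by exact k.2⟩
      left_inv := fun i => rfl
      right_inv := fun k => rfl }
  have e2 : s₂ ≃ Fin (D - (K - 1)) :=
    { toFun := fun i => ⟨i.1.1 - (K - 1), by have := i.1.2; have := i.2; simp only [hs₂, Set.mem_setOf_eq] at *; omega⟩
      invFun := fun k => ⟨⟨k.1 + (K - 1), by have := k.2; omega⟩, by simp only [hs₂, Set.mem_setOf_eq]; omega⟩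
      left_inv := fun i => by
        apply Subtype.ext; apply Fin.ext
        have := i.2; simp only [hs₂, Set.mem_setOf_eq] at this ⊢; omega
      right_inv := fun k => by apply Fin.ext; simp }
  have hdim1 : Module.finrank ℝ (LinearMap.range f₁) = K := by
    rw [LinearMap.finrank_range_of_inj hinj1, Module.finrank_pi ℝ, Fintype.card_congr e1,
      Fintype.card_fin]
  have hdim2 : Module.finrank ℝ (LinearMap.range f₂) = D - (K - 1) := by
    rw [LinearMap.finrank_range_of_inj hinj2, Module.finrank_pi ℝ, Fintype.card_congr e2,
      Fintype.card_fin]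
  have hinter : 0 < Module.finrank ℝ ↥(LinearMap.range f₁ ⊓ LinearMap.range f₂) := by
    have hsum := Submodule.finrank_sup_add_finrank_inf_eq (LinearMap.range f₁) (LinearMap.range f₂)
    have hle : Module.finrank ℝ ↥(LinearMap.range f₁ ⊔ LinearMap.range f₂) ≤ D := by
      have := Submodule.finrank_le (LinearMap.range f₁ ⊔ LinearMap.range f₂)
      simpa [Module.finrank_pi] using this
    omega
  obtain ⟨x, hx, hxne⟩ := exists_mem_ne_zero_of_rank_pos
    (s := LinearMap.range f₁ ⊓ LinearMap.range f₂)
    (by rw [← Submodule.finrank_eq_rank]; exact_mod_cast hinter)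
  obtain ⟨a, ha⟩ := hx.1
  obtain ⟨b, hb⟩ := hx.2
  -- x = Q *ᵥ (extMap a), x = Q' *ᵥ (extMap b)
  have hxa : x = Q *ᵥ (extMap D s₁ a) := by
    rw [← ha]; simp [hf₁, Matrix.mulVecLin_apply]
  have hxb : x = Q' *ᵥ (extMap D s₂ b) := by
    rw [← hb]; simp [hf₂, Matrix.mulVecLin_apply]
  set ta := extMap D s₁ a with hta
  set tb := extMap D s₂ b with htb
  have hxx : x ⬝ᵥ x = ta ⬝ᵥ ta := by rw [hxa]; exact orth_dot Q hQ _ _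
  have hxx' : x ⬝ᵥ x = tb ⬝ᵥ tb := by rw [hxb]; exact orth_dot Q' hQ' _ _
  have hxxpos : 0 < x ⬝ᵥ x := by
    have h0 : 0 ≤ x ⬝ᵥ x := Finset.sum_nonneg fun i _ => mul_self_nonneg _
    rcases lt_or_eq_of_le h0 with h | h
    · exact h
    · exact absurd (dotProduct_self_eq_zero.mp h.symm) hxne
  -- lower bound for M
  have hMlow : σ kk * (x ⬝ᵥ x) ≤ x ⬝ᵥ (M *ᵥ x) := by
    rw [hxa, hdec, orth_quad Q hQ, orth_dot Q hQ]
    have : ta ⬝ᵥ ta = ∑ i, ta i ^ 2 := by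
      simp [dotProduct, sq]
    rw [this, Finset.mul_sum]
    apply Finset.sum_le_sum
    intro i _
    by_cases h : ta i = 0
    · simp [h]
    · have his : i ∈ s₁ := extMap_mem D s₁ a i h
      have hle : i ≤ kk := by
        rw [Fin.le_def]; simp only [hkk]
        have : (i : ℕ) < K := his
        omega
      exact mul_le_mul_of_nonneg_right (hsort hle) (sq_nonneg _)
  -- upper bound for N
  have hNup : x ⬝ᵥ (N *ᵥ x) ≤ σ' kk * (x ⬝ᵥ x) := by
    rw [hxb, hdec', orth_quad Q' hQ', orth_dot Q' hQ']
    have : tb ⬝ᵥ tb = ∑ i, tb i ^ 2 := by simp [dotProduct, sq]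
    rw [this, Finset.mul_sum]
    apply Finset.sum_le_sum
    intro i _
    by_cases h : tb i = 0
    · simp [h]
    · have his : i ∈ s₂ := extMap_mem D s₂ b i h
      have hle : kk ≤ i := by
        rw [Fin.le_def]; simp only [hkk]
        have : K - 1 ≤ (i : ℕ) := his
        omega
      exact mul_le_mul_of_nonneg_right (hsort' hle) (sq_nonneg _)
  have hpert : x ⬝ᵥ ((M - N) *ᵥ x) ≤ opNorm (M - N) * (x ⬝ᵥ x) := dot_le_opNorm _ _
  have hsplit : x ⬝ᵥ (M *ᵥ x) = x ⬝ᵥ (N *ᵥ x) + x ⬝ᵥ ((M - N) *ᵥ x) := by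
    rw [Matrix.sub_mulVec, dotProduct_sub]; ring
  nlinarith [hMlow, hNup, hpert, hxxpos]
/-- if `‖M₂ - M̂₂‖₂ ≤ σ_K(M₂)/2` and `Ŵ` whitens `M̂₂` via its top-K
eigendecomposition, then `‖Ŵ‖₂² ≤ 2/σ_K(M₂)`. -/
theorem stmt3 (D K : ℕ) (hK : 0 < K) (hKD : K ≤ D)
    (M₂ N₂ : Matrix (Fin D) (Fin D) ℝ) (h1 : M₂.PosSemidef) (h2 : N₂.PosSemidef)
    -- full sorted eigendecomposition of M₂
    (σ : Fin D → ℝ) (Q : Matrix (Fin D) (Fin D) ℝ)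
    (hQ : Qᵀ * Q = 1) (hsort : Antitone σ)
    (hdec : M₂ = Q * Matrix.diagonal σ * Qᵀ)
    -- full sorted eigendecomposition of N₂ = M̂₂
    (σ' : Fin D → ℝ) (Q' : Matrix (Fin D) (Fin D) ℝ)
    (hQ' : Q'ᵀ * Q' = 1) (hsort' : Antitone σ')
    (hdec' : N₂ = Q' * Matrix.diagonal σ' * Q'ᵀ)
    (hσK : 0 < σ ⟨K - 1, by omega⟩)
    (hε : opNorm (M₂ - N₂) ≤ σ ⟨K - 1, by omega⟩ / 2)
    -- Ŵ built from the top-K eigenpairs of N₂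
    (U' : Matrix (Fin D) (Fin K) ℝ)
    (hU' : U' = Q'.submatrix id (Fin.castLE hKD))
    (W' : Matrix (Fin D) (Fin K) ℝ)
    (hW' : W' = U' * Matrix.diagonal (fun k => (Real.sqrt (σ' (Fin.castLE hKD k)))⁻¹)) :
    opNorm W' ^ 2 ≤ 2 / σ ⟨K - 1, by omega⟩ := by
  classical
  set kk : Fin D := ⟨K - 1, by omega⟩ with hkk
  show opNorm W' ^ 2 ≤ 2 / σ kk
  have hσKpos : 0 < σ kk := hσK
  have hε' : opNorm (M₂ - N₂) ≤ σ kk / 2 := hε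
  have hweyl : σ kk ≤ σ' kk + opNorm (M₂ - N₂) :=
    weyl_step D K hK hKD M₂ N₂ σ Q hQ hsort hdec σ' Q' hQ' hsort' hdec'
  have hσ'pos : σ kk / 2 ≤ σ' kk := by linarith
  have hσ'kkpos : 0 < σ' kk := by linarith
  -- orthonormality of U' columns
  have key : ∀ a b : Fin D, ∑ i, Q' i a * Q' i b = if a = b then 1 else 0 := by
    intro a b
    have := congrFun (congrFun hQ' a) b
    simpa [Matrix.mul_apply, Matrix.transpose_apply, Matrix.one_apply] using this
  have hU'orth : U'ᵀ * U' = 1 := by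
    ext j k
    simp only [hU', Matrix.mul_apply, Matrix.transpose_apply, Matrix.submatrix_apply, id]
    rw [key]
    simp [Matrix.one_apply, Fin.castLE_inj]
  set d : Fin K → ℝ := fun k => (Real.sqrt (σ' (Fin.castLE hKD k)))⁻¹ with hd
  have hσ'k : ∀ k : Fin K, σ' kk ≤ σ' (Fin.castLE hKD k) := by
    intro k
    apply hsort'
    rw [Fin.le_def]
    simp only [Fin.coe_castLE, hkk]
    omega
  set c : ℝ := (σ' kk)⁻¹ with hc
  have hcpos : 0 < c := inv_pos.mpr hσ'kkpos
  have hbound : ∀ x : Fin K → ℝ, (W' *ᵥ x) ⬝ᵥ (W' *ᵥ x) ≤ c * (x ⬝ᵥ x) := by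
    intro x
    have h1 : W' *ᵥ x = U' *ᵥ (Matrix.diagonal d *ᵥ x) := by
      rw [hW', ← Matrix.mulVec_mulVec]
    rw [h1, orth_dot U' hU'orth]
    have h2 : (Matrix.diagonal d *ᵥ x) ⬝ᵥ (Matrix.diagonal d *ᵥ x)
        = ∑ k, (d k) ^ 2 * (x k) ^ 2 := by
      simp [dotProduct, Matrix.mulVec_diagonal]
      exact Finset.sum_congr rfl fun k _ => by ring
    have h3 : x ⬝ᵥ x = ∑ k, (x k) ^ 2 := by simp [dotProduct, sq]
    rw [h2, h3, Finset.mul_sum]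
    apply Finset.sum_le_sum
    intro k _
    have hpos : 0 < σ' (Fin.castLE hKD k) := lt_of_lt_of_le hσ'kkpos (hσ'k k)
    have hdk : (d k) ^ 2 = (σ' (Fin.castLE hKD k))⁻¹ := by
      show ((Real.sqrt (σ' (Fin.castLE hKD k)))⁻¹) ^ 2 = _
      rw [inv_pow, Real.sq_sqrt hpos.le]
    rw [hdk]
    apply mul_le_mul_of_nonneg_right _ (sq_nonneg _)
    rw [hc]
    exact inv_anti₀ hσ'kkpos (hσ'k k)
  have hop : opNorm W' ≤ Real.sqrt c := opNorm_le_of_sq W' c hcpos.le hbound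
  have hop2 : opNorm W' ^ 2 ≤ c := by
    have := pow_le_pow_left₀ (norm_nonneg _) hop 2
    rwa [Real.sq_sqrt hcpos.le] at this
  have : c ≤ 2 / σ kk := by
    rw [hc]
    have h2σ : (0:ℝ) < σ kk / 2 := by linarith
    calc (σ' kk)⁻¹ ≤ (σ kk / 2)⁻¹ := inv_anti₀ h2σ hσ'pos
      _ = 2 / σ kk := by rw [inv_div]
  linarith
end

section
/- With the same mixture model and w₁, w₂, w₃ conditionally i.i.d. given h, the third-order joint probability tensor M₃ with entries [M₃]_{ijl} = P[w₁=y_i, w₂=y_j, w₃=y_l] satisfies M₃ = Σ_{k=1}^K π_k μ̄_k ⊗ μ̄_k ⊗ μ̄_k, and if W whitens M₂ = Σ_k π_k μ̄_k μ̄_kᵀ, then M₃(W,W,W) = Σ_k (1/√π_k) μ̃_k ⊗ μ̃_k ⊗ μ̃_k where μ̃_k = √π_k Wᵀ μ̄_k are orthonormal. -/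
open MeasureTheory Matrix Finset

private lemma factor3' {D : Type*} [Fintype D] (c : ℝ) (f g e : D → ℝ) :
    ∑ i, ∑ j, ∑ l, c * f i * g j * e l = c * (∑ i, f i) * (∑ j, g j) * (∑ l, e l) := by
  calc ∑ i, ∑ j, ∑ l, c * f i * g j * e l
      = ∑ i, ∑ j, (c * f i * g j) * ∑ l, e l :=
        Finset.sum_congr rfl fun i _ => Finset.sum_congr rfl fun j _ =>
          (Finset.mul_sum _ _ _).symm
    _ = ∑ i, ((c * f i) * ∑ j, g j) * ∑ l, e l := by
        refine Finset.sum_congr rfl fun i _ => ?_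
        rw [← Finset.sum_mul, ← Finset.mul_sum]
    _ = c * (∑ i, f i) * (∑ j, g j) * (∑ l, e l) := by
        rw [← Finset.sum_mul, ← Finset.sum_mul, ← Finset.mul_sum]

/-- with `w₁, w₂, w₃` conditionally i.i.d. given `h`, the third-order
joint probability tensor is `M₃ = ∑ k, π k • μ̄ k ⊗ μ̄ k ⊗ μ̄ k`; moreover, if `W`
whitens `M₂ = ∑ k, π k • μ̄ k μ̄ kᵀ`, then
`M₃(W,W,W) = ∑ k, (1/√(π k)) μ̃ k ⊗ μ̃ k ⊗ μ̃ k` where `μ̃ k = √(π k) Wᵀ μ̄ k` are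
orthonormal. -/
theorem stmt18 {Ω : Type*} [MeasurableSpace Ω]
    (μ : Measure Ω) [IsProbabilityMeasure μ]
    (D K : ℕ) (π : Fin K → ℝ) (hπpos : ∀ k, 0 < π k) (hπ1 : ∑ k, π k = 1)
    (μbar : Fin K → Fin D → ℝ)
    (hμpos : ∀ k i, 0 ≤ μbar k i) (hμ1 : ∀ k, ∑ i, μbar k i = 1)
    (h : Ω → Fin K) (w₁ w₂ w₃ : Ω → Fin D)
    (hmh : Measurable h) (hm1 : Measurable w₁) (hm2 : Measurable w₂) (hm3 : Measurable w₃)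
    (hh : ∀ k, (μ {ω | h ω = k}).toReal = π k)
    (hc1 : ∀ k i, (μ ({ω | w₁ ω = i} ∩ {ω | h ω = k})).toReal = π k * μbar k i)
    (hc2 : ∀ k i, (μ ({ω | w₂ ω = i} ∩ {ω | h ω = k})).toReal = π k * μbar k i)
    (hc3 : ∀ k i, (μ ({ω | w₃ ω = i} ∩ {ω | h ω = k})).toReal = π k * μbar k i)
    -- conditional independence of w₁, w₂, w₃ given h
    (hci : ∀ k i j l,
      (μ ({ω | w₁ ω = i} ∩ {ω | w₂ ω = j} ∩ {ω | w₃ ω = l} ∩ {ω | h ω = k})).toReal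
          * (π k) ^ 2
        = (π k * μbar k i) * (π k * μbar k j) * (π k * μbar k l))
    (W : Matrix (Fin D) (Fin K) ℝ)
    (hW : Wᵀ * (∑ k, π k • Matrix.vecMulVec (μbar k) (μbar k)) * W = 1) :
    (∀ i j l, (μ ({ω | w₁ ω = i} ∩ {ω | w₂ ω = j} ∩ {ω | w₃ ω = l})).toReal
        = ∑ k, π k * μbar k i * μbar k j * μbar k l) ∧
    (∀ a b c,
      (∑ i, ∑ j, ∑ l,
          (∑ k, π k * μbar k i * μbar k j * μbar k l) * W i a * W j b * W l c)
        = ∑ k, (Real.sqrt (π k))⁻¹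
            * (Real.sqrt (π k) • (Wᵀ).mulVec (μbar k)) a
            * (Real.sqrt (π k) • (Wᵀ).mulVec (μbar k)) b
            * (Real.sqrt (π k) • (Wᵀ).mulVec (μbar k)) c) ∧
    (∀ k k' : Fin K,
      (Real.sqrt (π k) • (Wᵀ).mulVec (μbar k)) ⬝ᵥ (Real.sqrt (π k') • (Wᵀ).mulVec (μbar k'))
        = if k = k' then 1 else 0) := by
  have hsq : ∀ k, Real.sqrt (π k) * Real.sqrt (π k) = π k :=
    fun k => Real.mul_self_sqrt (hπpos k).le
  have hsne : ∀ k, Real.sqrt (π k) ≠ 0 :=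
    fun k => ne_of_gt (Real.sqrt_pos.mpr (hπpos k))
  refine ⟨?_, ?_, ?_⟩
  · -- Part 1: the tensor decomposition
    intro i j l
    set S : Set Ω := {ω | w₁ ω = i} ∩ {ω | w₂ ω = j} ∩ {ω | w₃ ω = l} with hS
    have hSm : MeasurableSet S :=
      ((hm1 (measurableSet_singleton i)).inter (hm2 (measurableSet_singleton j))).inter
        (hm3 (measurableSet_singleton l))
    have hdecomp : S = ⋃ k, S ∩ {ω | h ω = k} := by
      ext ω; simp [S]
    have hmk : ∀ k : Fin K, MeasurableSet (S ∩ {ω | h ω = k}) := fun k =>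
      hSm.inter (hmh (measurableSet_singleton k))
    have hdisj : Pairwise (Function.onFun Disjoint fun k => S ∩ {ω | h ω = k}) := by
      intro k k' hkk'
      refine Set.disjoint_left.mpr fun ω hω hω' => hkk' ?_
      exact hω.2.symm.trans hω'.2
    have hmeas : μ S = ∑ k, μ (S ∩ {ω | h ω = k}) := by
      conv_lhs => rw [hdecomp]
      rw [measure_iUnion hdisj hmk, tsum_fintype]
    have htr : (μ S).toReal = ∑ k, (μ (S ∩ {ω | h ω = k})).toReal := by
      rw [hmeas, ENNReal.toReal_sum (fun k _ => measure_ne_top μ _)]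
    rw [htr]
    refine Finset.sum_congr rfl fun k _ => ?_
    have hk := hci k i j l
    have hπ2 : (π k) ^ 2 ≠ 0 := pow_ne_zero _ (ne_of_gt (hπpos k))
    have hcancel : (μ (S ∩ {ω | h ω = k})).toReal * (π k) ^ 2
        = (π k * μbar k i * μbar k j * μbar k l) * (π k) ^ 2 := by
      have hSe : S ∩ {ω | h ω = k}
          = {ω | w₁ ω = i} ∩ {ω | w₂ ω = j} ∩ {ω | w₃ ω = l} ∩ {ω | h ω = k} := rfl
      rw [hSe, hk]; ring
    exact mul_right_cancel₀ hπ2 hcancel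
  · -- Part 2: the whitened tensor
    intro a b c
    have e1 : ∀ (x : Fin K) (k : Fin K),
        ((Wᵀ).mulVec (μbar k)) x = ∑ i, W i x * μbar k i := by
      intro x k
      simp [Matrix.mulVec, dotProduct, Matrix.transpose_apply]
    calc (∑ i, ∑ j, ∑ l,
            (∑ k, π k * μbar k i * μbar k j * μbar k l) * W i a * W j b * W l c)
        = ∑ i, ∑ j, ∑ l, ∑ k,
            π k * (W i a * μbar k i) * (W j b * μbar k j) * (W l c * μbar k l) := by
          refine Finset.sum_congr rfl fun i _ => Finset.sum_congr rfl fun j _ =>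
            Finset.sum_congr rfl fun l _ => ?_
          rw [Finset.sum_mul, Finset.sum_mul, Finset.sum_mul]
          exact Finset.sum_congr rfl fun k _ => by ring
      _ = ∑ i, ∑ j, ∑ k, ∑ l,
            π k * (W i a * μbar k i) * (W j b * μbar k j) * (W l c * μbar k l) :=
          Finset.sum_congr rfl fun i _ => Finset.sum_congr rfl fun j _ =>
            Finset.sum_comm
      _ = ∑ i, ∑ k, ∑ j, ∑ l,
            π k * (W i a * μbar k i) * (W j b * μbar k j) * (W l c * μbar k l) :=
          Finset.sum_congr rfl fun i _ => Finset.sum_comm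
      _ = ∑ k, ∑ i, ∑ j, ∑ l,
            π k * (W i a * μbar k i) * (W j b * μbar k j) * (W l c * μbar k l) :=
          Finset.sum_comm
      _ = ∑ k, (Real.sqrt (π k))⁻¹
              * (Real.sqrt (π k) • (Wᵀ).mulVec (μbar k)) a
              * (Real.sqrt (π k) • (Wᵀ).mulVec (μbar k)) b
              * (Real.sqrt (π k) • (Wᵀ).mulVec (μbar k)) c := by
          refine Finset.sum_congr rfl fun k _ => ?_
          rw [factor3']
          simp only [Pi.smul_apply, smul_eq_mul, e1]
          rw [show (Real.sqrt (π k))⁻¹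
                * (Real.sqrt (π k) * ∑ i, W i a * μbar k i)
                * (Real.sqrt (π k) * ∑ j, W j b * μbar k j)
                * (Real.sqrt (π k) * ∑ l, W l c * μbar k l)
              = ((Real.sqrt (π k))⁻¹ * Real.sqrt (π k))
                * ((Real.sqrt (π k) * Real.sqrt (π k))
                  * ((∑ i, W i a * μbar k i) * (∑ j, W j b * μbar k j)
                      * (∑ l, W l c * μbar k l))) from by ring,
            inv_mul_cancel₀ (hsne k), hsq k, one_mul]
          ring
  · -- Part 3: orthonormality
    intro k k'
    set B : Matrix (Fin D) (Fin K) ℝ :=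
      Matrix.of fun i k => Real.sqrt (π k) * μbar k i with hB
    have hM2 : (∑ k, π k • Matrix.vecMulVec (μbar k) (μbar k)) = B * Bᵀ := by
      ext i j
      simp only [Matrix.sum_apply, Matrix.smul_apply, Pi.smul_apply, smul_eq_mul,
        Matrix.vecMulVec_apply, Matrix.mul_apply, Matrix.transpose_apply, hB, Matrix.of_apply]
      refine Finset.sum_congr rfl fun m _ => ?_
      linear_combination (-(μbar m i * μbar m j)) * hsq m
    have hABentry : ∀ (a : Fin K) (m : Fin K),
        (Wᵀ * B) a m = Real.sqrt (π m) * ((Wᵀ).mulVec (μbar m)) a := by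
      intro a m
      simp only [Matrix.mul_apply, Matrix.of_apply, Matrix.mulVec, dotProduct,
        Matrix.transpose_apply, Finset.mul_sum, hB]
      exact Finset.sum_congr rfl fun i _ => by ring
    have hAAt : (Wᵀ * B) * (Wᵀ * B)ᵀ = 1 := by
      rw [Matrix.transpose_mul, Matrix.transpose_transpose]
      rw [hM2] at hW
      calc Wᵀ * B * (Bᵀ * W) = Wᵀ * (B * Bᵀ) * W := by
            simp only [Matrix.mul_assoc]
        _ = 1 := hW
    have hAtA : (Wᵀ * B)ᵀ * (Wᵀ * B) = 1 := mul_eq_one_comm.mp hAAt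
    have hkk' := congrFun (congrFun hAtA k) k'
    simp only [Matrix.mul_apply, Matrix.transpose_apply, Matrix.one_apply, hABentry] at hkk'
    simp only [dotProduct, Pi.smul_apply, smul_eq_mul]
    rw [← hkk']
end
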